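/- arXiv:2210.12805 — 4 statements merged into one kernel-verified Lean document; each statement's English description precedes it below -/
import Mathlib

section
/- Let X be an N×N real symmetric matrix with nonnegative entries, let α ∈ ℝ^N have nonnegative entries, let A = diag(α), and let ε ∈ (0,1). If Xα ≤ (1−ε)·1 entrywise and α_n · (X·1)_n ≤ 1−ε for every n (where 1 is the all-ones vector), then the ℓ₂ operator norm of AX satisfies ‖AX‖₂ ≤ 1−ε. -/
/-- The ℓ₂ operator norm (largest singular value) of a real square matrix. -/
noncomputable def l2OpNorm {N : ℕ} (M : Matrix (Fin N) (Fin N) ℝ) : ℝ :=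
  ‖Matrix.toEuclideanCLM (𝕜 := ℝ) M‖

/-- Lemma 1: polytopic sufficient condition for `‖AX‖₂ ≤ 1 - ε`. -/
theorem stmt_0 {N : ℕ} (X : Matrix (Fin N) (Fin N) ℝ) (α : Fin N → ℝ) (ε : ℝ)
    (hXsymm : X.IsSymm) (hXnonneg : ∀ n m, 0 ≤ X n m) (hαnonneg : ∀ n, 0 ≤ α n)
    (hε : ε ∈ Set.Ioo (0 : ℝ) 1)
    (hcol : ∀ n, X.mulVec α n ≤ 1 - ε)
    (hrow : ∀ n, α n * X.mulVec (fun _ => 1) n ≤ 1 - ε) :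
    l2OpNorm (Matrix.diagonal α * X) ≤ 1 - ε := by
  obtain ⟨hε0, hε1⟩ := hε
  have hR : (0:ℝ) ≤ 1 - ε := by linarith
  set M : Matrix (Fin N) (Fin N) ℝ := Matrix.diagonal α * X with hMdef
  have hMentry : ∀ n m, M n m = α n * X n m := by
    intro n m; simp [hMdef, Matrix.diagonal_mul]
  have hMnn : ∀ n m, 0 ≤ M n m := fun n m => by
    rw [hMentry]; exact mul_nonneg (hαnonneg n) (hXnonneg n m)
  -- row sums
  have hrowM : ∀ n, ∑ m, M n m ≤ 1 - ε := by
    intro n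
    have := hrow n
    simpa [Matrix.mulVec, dotProduct, hMentry, Finset.mul_sum] using this
  -- column sums, via symmetry
  have hcolM : ∀ m, ∑ n, M n m ≤ 1 - ε := by
    intro m
    have hs : ∀ n, X n m = X m n := fun n => by
      conv_lhs => rw [← hXsymm]
      rfl
    calc ∑ n, M n m = ∑ n, X m n * α n := by
          simp only [hMentry]
          exact Finset.sum_congr rfl fun n _ => by rw [hs n, mul_comm]
      _ = X.mulVec α m := by simp [Matrix.mulVec, dotProduct]
      _ ≤ 1 - ε := hcol m
  unfold l2OpNorm
  apply ContinuousLinearMap.opNorm_le_bound _ hR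
  intro x
  set v : Fin N → ℝ := WithLp.equiv 2 _ x with hv
  have happ : (Matrix.toEuclideanCLM (𝕜 := ℝ) M) x
      = (WithLp.equiv 2 _).symm (M.mulVec v) := by
    conv_lhs => rw [← (WithLp.equiv 2 _).symm_apply_apply x]
    exact Matrix.toEuclideanCLM_toLp M _
  rw [happ]
  have hnormx : ‖x‖ = Real.sqrt (∑ m, v m ^ 2) := by
    rw [EuclideanSpace.norm_eq]
    congr 1
    exact Finset.sum_congr rfl fun m _ => by rw [Real.norm_eq_abs, sq_abs]; rfl
  have hnormMx : ‖(WithLp.equiv 2 (Fin N → ℝ)).symm (M.mulVec v)‖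
      = Real.sqrt (∑ n, (M.mulVec v n) ^ 2) := by
    rw [EuclideanSpace.norm_eq]
    congr 1
    exact Finset.sum_congr rfl fun n _ => by
      rw [Real.norm_eq_abs, sq_abs]; rfl
  rw [hnormMx, hnormx]
  -- key inequality
  have key : ∑ n, (M.mulVec v n) ^ 2 ≤ (1 - ε) ^ 2 * ∑ m, v m ^ 2 := by
    have CS : ∀ n, (M.mulVec v n) ^ 2 ≤ (∑ m, M n m) * (∑ m, M n m * v m ^ 2) := by
      intro n
      have h := Finset.sum_mul_sq_le_sq_mul_sq Finset.univ
        (fun m => Real.sqrt (M n m)) (fun m => Real.sqrt (M n m) * v m)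
      have e1 : ∀ m : Fin N, Real.sqrt (M n m) * (Real.sqrt (M n m) * v m)
          = M n m * v m := fun m => by
        rw [← mul_assoc, Real.mul_self_sqrt (hMnn n m)]
      have e2 : ∀ m : Fin N, Real.sqrt (M n m) ^ 2 = M n m := fun m =>
        Real.sq_sqrt (hMnn n m)
      have e3 : ∀ m : Fin N, (Real.sqrt (M n m) * v m) ^ 2 = M n m * v m ^ 2 :=
        fun m => by rw [mul_pow, e2]
      simp only [e1, e2, e3] at h
      simpa [Matrix.mulVec, dotProduct] using h
    calc ∑ n, (M.mulVec v n) ^ 2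
        ≤ ∑ n, (1 - ε) * (∑ m, M n m * v m ^ 2) := by
          apply Finset.sum_le_sum
          intro n _
          refine (CS n).trans ?_
          apply mul_le_mul_of_nonneg_right (hrowM n)
          exact Finset.sum_nonneg fun m _ =>
            mul_nonneg (hMnn n m) (sq_nonneg _)
      _ = (1 - ε) * ∑ m, (∑ n, M n m) * v m ^ 2 := by
          rw [← Finset.mul_sum, Finset.sum_comm]
          congr 1
          exact Finset.sum_congr rfl fun m _ => (Finset.sum_mul ..).symm
      _ ≤ (1 - ε) * ∑ m, (1 - ε) * v m ^ 2 := by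
          apply mul_le_mul_of_nonneg_left _ hR
          exact Finset.sum_le_sum fun m _ =>
            mul_le_mul_of_nonneg_right (hcolM m) (sq_nonneg _)
      _ = (1 - ε) ^ 2 * ∑ m, v m ^ 2 := by
          rw [← Finset.mul_sum]; ring
  calc Real.sqrt (∑ n, (M.mulVec v n) ^ 2)
      ≤ Real.sqrt ((1 - ε) ^ 2 * ∑ m, v m ^ 2) := Real.sqrt_le_sqrt key
    _ = (1 - ε) * Real.sqrt (∑ m, v m ^ 2) := by
        rw [Real.sqrt_mul (sq_nonneg _), Real.sqrt_sq hR]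
end

section
/- For the 2×2 matrix M = [[1/2, 1/2],[1/3, 2/3]], the ℓ₂ operator norm satisfies ‖M‖₂ > 1; equivalently, there exists a vector x ∈ ℝ² with ‖Mx‖₂ > ‖x‖₂. Consequently, for X = [[1,1],[1,2]] and α = (1/2, 1/3), the vector α satisfies the row-sum condition α_n·(X·1)_n ≤ 1 for every n with equality, yet ‖diag(α)·X‖₂ > 1. -/
open Matrix

lemma expand_imp {N : ℕ} (M : Matrix (Fin N) (Fin N) ℝ) (x : EuclideanSpace ℝ (Fin N))
    (h : ‖Matrix.toEuclideanCLM (𝕜 := ℝ) M x‖ > ‖x‖) : l2OpNorm M > 1 := by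
  rcases eq_or_ne x 0 with rfl | hx
  · simp at h
  · have hx : (0:ℝ) < ‖x‖ := norm_pos_iff.mpr hx
    have h2 := (Matrix.toEuclideanCLM (𝕜 := ℝ) M).le_opNorm x
    unfold l2OpNorm
    nlinarith

lemma key : ‖Matrix.toEuclideanCLM (𝕜 := ℝ) !![(1 : ℝ)/2, 1/2; 1/3, 2/3]
    ((WithLp.equiv 2 (Fin 2 → ℝ)).symm ![1, 2])‖ > ‖(WithLp.equiv 2 (Fin 2 → ℝ)).symm ![(1:ℝ), 2]‖ := by
  rw [WithLp.equiv_symm_apply, Matrix.toEuclideanCLM_toLp, ← Matrix.toLin'_apply]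
  rw [EuclideanSpace.norm_eq, EuclideanSpace.norm_eq]
  have h1 : Matrix.toLin' !![(1 : ℝ)/2, 1/2; 1/3, 2/3] ![1, 2] = ![3/2, 5/3] := by
    ext i
    fin_cases i <;>
      simp [Matrix.toLin'_apply, Matrix.mulVec, dotProduct, Fin.sum_univ_two] <;> norm_num
  simp only [PiLp.toLp_apply, h1, Fin.sum_univ_two, Real.norm_eq_abs,
    Matrix.cons_val_zero, Matrix.cons_val_one, Matrix.head_cons]
  rw [show (|(1:ℝ)|^2 + |(2:ℝ)|^2) = 5 by norm_num,
    show (|(3/2:ℝ)|^2 + |(5/3:ℝ)|^2) = 181/36 by rw [abs_of_pos, abs_of_pos] <;> norm_num]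
  have : Real.sqrt 5 < Real.sqrt (181/36) := by
    apply Real.sqrt_lt_sqrt <;> norm_num
  linarith

lemma mat_eq : Matrix.diagonal ![(1 : ℝ)/2, 1/3] * !![(1 : ℝ), 1; 1, 2] =
    !![(1 : ℝ)/2, 1/2; 1/3, 2/3] := by
  ext i j
  fin_cases i <;> fin_cases j <;>
    simp [Matrix.mul_apply, Fin.sum_univ_two, Matrix.diagonal] <;> norm_num

/-- The counterexample showing the row-sum condition (6b) alone does not imply
`‖diag(α) X‖₂ < 1`: for `M = [[1/2, 1/2], [1/3, 2/3]]` one has `‖M‖₂ > 1`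
(equivalently, some vector is strictly expanded), while for `X = [[1,1],[1,2]]`
and `α = (1/2, 1/3)` the row-sum condition holds with equality yet
`‖diag(α) X‖₂ > 1`. -/
theorem stmt_4 :
    l2OpNorm !![(1 : ℝ)/2, 1/2; 1/3, 2/3] > 1 ∧
    (∃ x : EuclideanSpace ℝ (Fin 2),
      ‖Matrix.toEuclideanCLM (𝕜 := ℝ) !![(1 : ℝ)/2, 1/2; 1/3, 2/3] x‖ > ‖x‖) ∧
    (∀ n, ![(1 : ℝ)/2, 1/3] n *
      (!![(1 : ℝ), 1; 1, 2]).mulVec (fun _ => 1) n = 1) ∧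
    l2OpNorm (Matrix.diagonal ![(1 : ℝ)/2, 1/3] * !![(1 : ℝ), 1; 1, 2]) > 1 := by
  have h := key
  refine ⟨expand_imp _ _ h, ⟨_, h⟩, ?_, ?_⟩
  · intro n
    fin_cases n <;>
      simp [Matrix.mulVec, dotProduct, Fin.sum_univ_two] <;> norm_num
  · rw [mat_eq]; exact expand_imp _ _ h
end

section
/- For parameters v̄ ∈ ℝ, 0 < δ < σ, q̄ > 0, and α := q̄/(σ−δ), and for every v ∈ ℝ, the value f(v) of the symmetric Volt/VAR rule is the unique minimizer over q ∈ [−q̄, q̄] of the strictly convex function g(q) = q²/(2α) + δ·|q| + q·(v − v̄). -/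
/-- The symmetric Volt/VAR rule with reference voltage `vbar`, deadband `δ`,
saturation voltage offset `σ`, and saturation reactive power `qbar`;
its slope is `α = qbar / (σ - δ)`. -/
noncomputable def vvRule (vbar δ σ qbar : ℝ) (v : ℝ) : ℝ :=
  if v ≤ vbar - σ then qbar
  else if v ≤ vbar - δ then -(qbar / (σ - δ)) * (v - vbar + δ)
  else if v ≤ vbar + δ then 0
  else if v ≤ vbar + σ then -(qbar / (σ - δ)) * (v - vbar - δ)
  else -qbar

/-- Clearing denominators in the objective comparison. -/
lemma vv_aux (α δ x f q : ℝ) (hα : 0 < α)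
    (key : f ^ 2 + 2 * α * (δ * |f| + f * x) < q ^ 2 + 2 * α * (δ * |q| + q * x)) :
    f ^ 2 / (2 * α) + δ * |f| + f * x < q ^ 2 / (2 * α) + δ * |q| + q * x := by
  have h2α : (0 : ℝ) < 2 * α := by linarith
  have e1 : f ^ 2 / (2 * α) + δ * |f| + f * x
      = (f ^ 2 + 2 * α * (δ * |f| + f * x)) / (2 * α) := by field_simp; ring
  have e2 : q ^ 2 / (2 * α) + δ * |q| + q * x
      = (q ^ 2 + 2 * α * (δ * |q| + q * x)) / (2 * α) := by field_simp; ring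
  rw [e1, e2]
  exact (div_lt_div_iff_of_pos_right h2α).mpr key

set_option maxHeartbeats 2000000 in
/-- Proximal characterization: `f(v)` is the unique minimizer over `[-qbar, qbar]` of the
strictly convex function `g(q) = q²/(2α) + δ|q| + q (v - vbar)`. -/
theorem stmt_8 (vbar δ σ qbar : ℝ) (hδ : 0 < δ) (hδσ : δ < σ) (hq : 0 < qbar) (v : ℝ) :
    StrictConvexOn ℝ (Set.Icc (-qbar) qbar)
      (fun q : ℝ => q ^ 2 / (2 * (qbar / (σ - δ))) + δ * |q| + q * (v - vbar)) ∧
    vvRule vbar δ σ qbar v ∈ Set.Icc (-qbar) qbar ∧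
    (∀ q ∈ Set.Icc (-qbar) qbar, q ≠ vvRule vbar δ σ qbar v →
      (vvRule vbar δ σ qbar v) ^ 2 / (2 * (qbar / (σ - δ)))
        + δ * |vvRule vbar δ σ qbar v| + (vvRule vbar δ σ qbar v) * (v - vbar)
      < q ^ 2 / (2 * (qbar / (σ - δ))) + δ * |q| + q * (v - vbar)) := by
  have hσδ : (0 : ℝ) < σ - δ := by linarith
  set α := qbar / (σ - δ) with hαdef
  have hα : 0 < α := div_pos hq hσδ
  have hαq : α * (σ - δ) = qbar := div_mul_cancel₀ _ hσδ.ne'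
  have h2α : (0 : ℝ) < 2 * α := by linarith
  clear_value α
  refine ⟨?_, ?_, ?_⟩
  · -- strict convexity
    have hsq : StrictConvexOn ℝ (Set.Icc (-qbar) qbar) (fun q : ℝ => q ^ 2 / (2 * α)) := by
      refine ⟨convex_Icc _ _, fun x _ y _ hxy a b ha hb hab => ?_⟩
      simp only [smul_eq_mul]
      have e : a * (x ^ 2 / (2 * α)) + b * (y ^ 2 / (2 * α))
          = (a * x ^ 2 + b * y ^ 2) / (2 * α) := by ring
      rw [e, div_lt_div_iff_of_pos_right h2α]
      have hxy2 : 0 < (x - y) ^ 2 := by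
        have := sub_ne_zero.mpr hxy; positivity
      nlinarith [mul_pos ha hb, mul_pos (mul_pos ha hb) hxy2]
    have habs : ConvexOn ℝ (Set.Icc (-qbar) qbar) (fun q : ℝ => δ * |q|) := by
      have h1 : ConvexOn ℝ (Set.Icc (-qbar) qbar) (norm : ℝ → ℝ) :=
        convexOn_norm (convex_Icc _ _)
      have h2 := h1.smul hδ.le
      simpa [Real.norm_eq_abs, smul_eq_mul] using h2
    have hlin : ConvexOn ℝ (Set.Icc (-qbar) qbar) (fun q : ℝ => q * (v - vbar)) := by
      refine ⟨convex_Icc _ _, fun x _ y _ a b _ _ _ => ?_⟩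
      simp only [smul_eq_mul]
      exact le_of_eq (by ring)
    have := hsq.add_convexOn (habs.add hlin)
    have heq : (fun q : ℝ => q ^ 2 / (2 * α) + δ * |q| + q * (v - vbar))
        = (fun q : ℝ => q ^ 2 / (2 * α)) + fun q : ℝ => δ * |q| + q * (v - vbar) := by
      funext q; simp [add_assoc]
    rw [heq]
    exact this
  · -- membership
    unfold vvRule
    split_ifs with h1 h2 h3 h4
    · exact ⟨by linarith, le_refl _⟩
    · push_neg at h1
      constructor
      · nlinarith [mul_nonneg hα.le (show (0:ℝ) ≤ vbar - δ - v by linarith)]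
      · nlinarith [mul_pos hα (show (0:ℝ) < v - (vbar - σ) by linarith)]
    · exact ⟨by linarith, by linarith⟩
    · push_neg at h3
      constructor
      · nlinarith [mul_pos hα (show (0:ℝ) < (vbar + σ) - v + (v - vbar - δ) by linarith),
          mul_nonneg hα.le (show (0:ℝ) ≤ (vbar + σ) - v by linarith)]
      · nlinarith [mul_nonneg hα.le (show (0:ℝ) ≤ v - vbar - δ by linarith)]
    · exact ⟨le_refl _, by linarith⟩
  · -- unique minimizer
    unfold vvRule
    split_ifs with h1 h2 h3 h4 <;> intro q hqm hne <;>
      obtain ⟨hql, hqu⟩ := hqm <;> apply vv_aux _ _ _ _ _ hα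
    · -- f = qbar, v ≤ vbar - σ
      rw [abs_of_pos hq]
      have h0 : 0 < (q - qbar) ^ 2 := by
        have := sub_ne_zero.mpr hne; positivity
      rcases abs_cases q with ⟨hc, hc2⟩ | ⟨hc, hc2⟩ <;> rw [hc] <;>
        nlinarith [h0, hαq, mul_pos hα hδ,
          mul_nonneg (mul_nonneg hα.le (show (0:ℝ) ≤ qbar - q by linarith))
            (show (0:ℝ) ≤ (vbar - σ) - v by linarith)]
    · -- f = -α (v - vbar + δ), vbar - σ < v ≤ vbar - δ
      push_neg at h1
      rw [← hαdef] at hne ⊢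
      have hf0 : (0:ℝ) ≤ -α * (v - vbar + δ) := by
        nlinarith [mul_nonneg hα.le (show (0:ℝ) ≤ vbar - δ - v by linarith)]
      rw [abs_of_nonneg hf0]
      have h0 : 0 < (q - (-α * (v - vbar + δ))) ^ 2 := by
        have := sub_ne_zero.mpr hne; positivity
      rcases abs_cases q with ⟨hc, hc2⟩ | ⟨hc, hc2⟩ <;> rw [hc]
      · nlinarith [h0]
      · nlinarith [h0, mul_pos (mul_pos hα hδ) (neg_pos.mpr hc2)]
    · -- f = 0, vbar - δ < v ≤ vbar + δ
      push_neg at h1 h2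
      simp only [abs_zero, mul_zero, zero_mul, add_zero, zero_pow, ne_eq,
        OfNat.ofNat_ne_zero, not_false_eq_true, zero_add]
      have h0 : 0 < q ^ 2 := by positivity
      rcases abs_cases q with ⟨hc, hc2⟩ | ⟨hc, hc2⟩ <;> rw [hc]
      · nlinarith [h0, mul_nonneg (mul_nonneg hα.le hc2) (show (0:ℝ) ≤ δ + (v - vbar) by linarith)]
      · nlinarith [h0, mul_nonneg (mul_nonneg hα.le (show (0:ℝ) ≤ -q by linarith))
          (show (0:ℝ) ≤ δ - (v - vbar) by linarith)]
    · -- f = -α (v - vbar - δ), vbar + δ < v ≤ vbar + σ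
      push_neg at h1 h2 h3
      rw [← hαdef] at hne ⊢
      have hf0 : -α * (v - vbar - δ) ≤ 0 := by
        nlinarith [mul_nonneg hα.le (show (0:ℝ) ≤ v - vbar - δ by linarith)]
      rw [abs_of_nonpos hf0]
      have h0 : 0 < (q - (-α * (v - vbar - δ))) ^ 2 := by
        have := sub_ne_zero.mpr hne; positivity
      rcases abs_cases q with ⟨hc, hc2⟩ | ⟨hc, hc2⟩ <;> rw [hc]
      · nlinarith [h0, mul_nonneg (mul_pos hα hδ).le hc2]
      · nlinarith [h0]
    · -- f = -qbar, v > vbar + σ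
      push_neg at h1 h2 h3 h4
      rw [abs_of_neg (by linarith : -qbar < 0)]
      have h0 : 0 < (q + qbar) ^ 2 := by
        have hne' : q - (-qbar) ≠ 0 := sub_ne_zero.mpr hne
        have : q + qbar ≠ 0 := by intro h; apply hne'; linarith
        positivity
      rcases abs_cases q with ⟨hc, hc2⟩ | ⟨hc, hc2⟩ <;> rw [hc] <;>
        nlinarith [h0, hαq, mul_pos hα hδ,
          mul_nonneg (mul_nonneg hα.le (show (0:ℝ) ≤ q + qbar by linarith))
            (show (0:ℝ) ≤ v - (vbar + σ) by linarith)]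
end

section
/- Let X be an N×N real symmetric positive definite matrix, ṽ, v̄ ∈ ℝ^N, and for each n let f_n be the symmetric Volt/VAR rule with parameters (v̄_n, δ_n, σ_n, q̄_n) with 0 < δ_n < σ_n, q̄_n > 0, and α_n := q̄_n/(σ_n−δ_n). Then a vector q ∈ ℝ^N satisfies the equilibrium conditions q_n = f_n((Xq + ṽ)_n) for all n if and only if q is the (unique) minimizer over the box {q : −q̄_n ≤ q_n ≤ q̄_n for all n} of the function V(q) + C(q), where V(q) = (1/2)qᵀXq + qᵀ(ṽ − v̄) and C(q) = Σ_n [ q_n²/(2α_n) + δ_n|q_n| ]. -/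
open Matrix

noncomputable def psi (vb d s qb u t : ℝ) : ℝ :=
  (u - vb) * t + t ^ 2 / (2 * (qb / (s - d))) + d * |t|

lemma psi_eq (vb d s qb u t : ℝ) (hds : d < s) (hqb : 0 < qb) :
    psi vb d s qb u t = (u - vb) * t + (s - d) / (2 * qb) * t ^ 2 + d * |t| := by
  unfold psi
  have h1 : s - d ≠ 0 := by linarith
  have h2 : qb ≠ 0 := ne_of_gt hqb
  field_simp

lemma vv_bounds (vb d s qb u : ℝ) (hd : 0 < d) (hds : d < s) (hqb : 0 < qb) :
    -qb ≤ vvRule vb d s qb u ∧ vvRule vb d s qb u ≤ qb := by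
  have hsd : 0 < s - d := by linarith
  have hA : 0 < qb / (s - d) := div_pos hqb hsd
  have hAq : qb / (s - d) * (s - d) = qb := div_mul_cancel₀ qb (ne_of_gt hsd)
  unfold vvRule
  split_ifs with h1 h2 h3 h4 <;> constructor <;> nlinarith

lemma vv_min (vb d s qb u t : ℝ) (hd : 0 < d) (hds : d < s) (hqb : 0 < qb)
    (ht1 : -qb ≤ t) (ht2 : t ≤ qb) :
    psi vb d s qb u (vvRule vb d s qb u) ≤ psi vb d s qb u t := by
  have hsd : 0 < s - d := by linarith
  have hk : 0 < (s - d) / (2 * qb) := div_pos hsd (by linarith)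
  set k := (s - d) / (2 * qb) with hkdef
  have hk2 : k * (2 * qb) = s - d := div_mul_cancel₀ _ (by positivity)
  rw [psi_eq _ _ _ _ _ _ hds hqb, psi_eq _ _ _ _ _ _ hds hqb]
  have htabs := le_abs_self t
  have htabs' := neg_abs_le t
  unfold vvRule
  split_ifs with h1 h2 h3 h4
  · -- u ≤ vb - s, value qb
    rw [abs_of_pos hqb]
    nlinarith [mul_nonneg (sub_nonneg.2 ht2) (sub_nonneg.2 ht2)]
  · -- slope branch, value fu = -(qb/(s-d))*(u-vb+d), fu ≥ 0
    set fu := -(qb / (s - d)) * (u - vb + d) with hfu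
    have hfu2 : 2 * k * fu = -(u - vb + d) := by
      rw [hfu, hkdef]; field_simp
    have hfu0 : 0 ≤ fu := by
      rw [hfu]
      have : u - vb + d ≤ 0 := by linarith
      nlinarith [div_pos hqb hsd]
    rw [abs_of_nonneg hfu0]
    nlinarith [mul_nonneg hk.le (sq_nonneg (t - fu))]
  · -- deadband, value 0
    rw [abs_zero]
    rcases abs_cases t with ⟨h, h'⟩ | ⟨h, h'⟩ <;> nlinarith
  · -- slope branch, value fu = -(qb/(s-d))*(u-vb-d), fu ≤ 0
    set fu := -(qb / (s - d)) * (u - vb - d) with hfu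
    have hfu2 : 2 * k * fu = -(u - vb - d) := by
      rw [hfu, hkdef]; field_simp
    have hfu0 : fu ≤ 0 := by
      rw [hfu]
      have : 0 ≤ u - vb - d := by linarith
      nlinarith [div_pos hqb hsd]
    rw [abs_of_nonpos hfu0]
    nlinarith [mul_nonneg hk.le (sq_nonneg (t - fu))]
  · -- u > vb + s, value -qb
    rw [abs_neg, abs_of_pos hqb]
    nlinarith [mul_nonneg (sub_nonneg.2 ht1 : (0:ℝ) ≤ t - -qb) (sub_nonneg.2 ht1 : (0:ℝ) ≤ t - -qb)]

lemma psi_convex (vb d s qb u : ℝ) (hd : 0 < d) (hds : d < s) (hqb : 0 < qb)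
    (x y l : ℝ) (h0 : 0 ≤ l) (h1 : l ≤ 1) :
    psi vb d s qb u ((1 - l) * x + l * y) ≤ (1 - l) * psi vb d s qb u x + l * psi vb d s qb u y := by
  have hk : 0 < (s - d) / (2 * qb) := div_pos (by linarith) (by linarith)
  rw [psi_eq _ _ _ _ _ _ hds hqb, psi_eq _ _ _ _ _ _ hds hqb, psi_eq _ _ _ _ _ _ hds hqb]
  have habs : |(1 - l) * x + l * y| ≤ (1 - l) * |x| + l * |y| := by
    calc |(1 - l) * x + l * y| ≤ |(1 - l) * x| + |l * y| := abs_add_le _ _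
    _ = (1 - l) * |x| + l * |y| := by
        rw [abs_mul, abs_mul, abs_of_nonneg h0, abs_of_nonneg (by linarith : (0:ℝ) ≤ 1 - l)]
  nlinarith [mul_nonneg (mul_nonneg hk.le h0) (mul_nonneg (by linarith : (0:ℝ) ≤ 1 - l) (sq_nonneg (x - y)))]

lemma psi_unique (vb d s qb u : ℝ) (hd : 0 < d) (hds : d < s) (hqb : 0 < qb)
    {x y : ℝ} (hx1 : -qb ≤ x) (hx2 : x ≤ qb) (hy1 : -qb ≤ y) (hy2 : y ≤ qb)
    (hxmin : ∀ t, -qb ≤ t → t ≤ qb → psi vb d s qb u x ≤ psi vb d s qb u t)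
    (hymin : ∀ t, -qb ≤ t → t ≤ qb → psi vb d s qb u y ≤ psi vb d s qb u t) :
    x = y := by
  by_contra hne
  have hk : 0 < (s - d) / (2 * qb) := div_pos (by linarith) (by linarith)
  have hm1 : -qb ≤ (x + y) / 2 := by linarith
  have hm2 : (x + y) / 2 ≤ qb := by linarith
  have hxy : psi vb d s qb u x = psi vb d s qb u y :=
    le_antisymm (hxmin y hy1 hy2) (hymin x hx1 hx2)
  have hmid : psi vb d s qb u ((x + y) / 2)
      ≤ (psi vb d s qb u x + psi vb d s qb u y) / 2
        - (s - d) / (2 * qb) * ((x - y) / 2) ^ 2 := by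
    rw [psi_eq _ _ _ _ _ _ hds hqb, psi_eq _ _ _ _ _ _ hds hqb, psi_eq _ _ _ _ _ _ hds hqb]
    have habs : |(x + y) / 2| ≤ (|x| + |y|) / 2 := by
      calc |(x + y) / 2| = |x + y| / 2 := by rw [abs_div]; norm_num
      _ ≤ (|x| + |y|) / 2 := by linarith [abs_add_le x y]
    nlinarith
  have := hxmin ((x + y) / 2) hm1 hm2
  have hpos : 0 < (s - d) / (2 * qb) * ((x - y) / 2) ^ 2 := by
    apply mul_pos hk
    have : x - y ≠ 0 := sub_ne_zero.2 hne
    positivity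
  linarith

lemma small_step {c K : ℝ} (hK : 0 ≤ K) (h : ∀ l : ℝ, 0 < l → l ≤ 1 → c ≤ K * l) : c ≤ 0 := by
  by_contra hc
  push_neg at hc
  set l := min 1 (c / (2 * (K + 1))) with hl
  have hl0 : 0 < l := lt_min one_pos (div_pos hc (by linarith))
  have hl1 : l ≤ 1 := min_le_left _ _
  have h1 := h l hl0 hl1
  have h2 : K * l ≤ (K + 1) * (c / (2 * (K + 1))) :=
    mul_le_mul (by linarith) (min_le_right _ _) hl0.le (by linarith)
  have h3 : (K + 1) * (c / (2 * (K + 1))) = c / 2 := by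
    field_simp
  linarith

/-- Variational characterization of the Volt/VAR equilibrium: `q` is an equilibrium of
the Volt/VAR dynamics iff it is the unique minimizer of `V(q) + C(q)` over the box
`-qbar ≤ q ≤ qbar`, where `V(q) = ½ qᵀXq + qᵀ(ṽ - v̄)` and
`C(q) = Σ_n qₙ²/(2αₙ) + δₙ|qₙ|`. -/
theorem stmt_9 {N : ℕ} (X : Matrix (Fin N) (Fin N) ℝ) (hX : X.PosDef)
    (hXsymm : X.IsSymm) (vtil vbar δ σ qbar : Fin N → ℝ)
    (hδ : ∀ n, 0 < δ n) (hδσ : ∀ n, δ n < σ n) (hq : ∀ n, 0 < qbar n)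
    (F : (Fin N → ℝ) → ℝ)
    (hF : ∀ p, F p = (1 / 2) * (p ⬝ᵥ X.mulVec p) + p ⬝ᵥ (vtil - vbar)
      + ∑ n, (p n ^ 2 / (2 * (qbar n / (σ n - δ n))) + δ n * |p n|))
    (B : Set (Fin N → ℝ))
    (hB : B = {p | ∀ n, -qbar n ≤ p n ∧ p n ≤ qbar n})
    (q : Fin N → ℝ) :
    (∀ n, q n = vvRule (vbar n) (δ n) (σ n) (qbar n) ((X.mulVec q + vtil) n)) ↔
    (q ∈ B ∧ (∀ p ∈ B, F q ≤ F p) ∧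
      ∀ p ∈ B, (∀ r ∈ B, F p ≤ F r) → p = q) := by
  have hsym : ∀ a b : Fin N → ℝ, a ⬝ᵥ X.mulVec b = b ⬝ᵥ X.mulVec a := by
    intro a b
    calc a ⬝ᵥ X.mulVec b = ∑ i, ∑ j, a i * (X i j * b j) := by
          simp [dotProduct, mulVec, Finset.mul_sum]
    _ = ∑ j, ∑ i, a i * (X i j * b j) := Finset.sum_comm
    _ = b ⬝ᵥ X.mulVec a := by
          simp only [dotProduct, mulVec, Finset.mul_sum]
          refine Finset.sum_congr rfl fun j _ => Finset.sum_congr rfl fun i _ => ?_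
          rw [hXsymm.apply j i]
          ring
  set Ψ : Fin N → ℝ → ℝ := fun n t =>
    psi (vbar n) (δ n) (σ n) (qbar n) ((X.mulVec q + vtil) n) t with hΨ
  have key : ∀ p : Fin N → ℝ,
      F p - F q = (1/2) * ((p - q) ⬝ᵥ X.mulVec (p - q)) + ∑ n, (Ψ n (p n) - Ψ n (q n)) := by
    intro p
    have e1 : (p - q) ⬝ᵥ X.mulVec (p - q)
        = p ⬝ᵥ X.mulVec p - 2 * (q ⬝ᵥ X.mulVec p) + q ⬝ᵥ X.mulVec q := by
      rw [mulVec_sub, dotProduct_sub, sub_dotProduct, sub_dotProduct, hsym p q]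
      ring
    have e2 : ∀ r : Fin N → ℝ, ∑ n, Ψ n (r n)
        = q ⬝ᵥ X.mulVec r + r ⬝ᵥ (vtil - vbar)
          + ∑ n, (r n ^ 2 / (2 * (qbar n / (σ n - δ n))) + δ n * |r n|) := by
      intro r
      have : ∀ n, Ψ n (r n) = ((X.mulVec q) n + (vtil - vbar) n) * r n
          + (r n ^ 2 / (2 * (qbar n / (σ n - δ n))) + δ n * |r n|) := by
        intro n
        simp only [hΨ, psi, Pi.add_apply, Pi.sub_apply]
        ring
      rw [Finset.sum_congr rfl fun n _ => this n, Finset.sum_add_distrib]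
      congr 1
      have : q ⬝ᵥ X.mulVec r = (X.mulVec q) ⬝ᵥ r := by
        rw [hsym q r, dotProduct_comm]
      rw [this]
      simp only [dotProduct, Pi.sub_apply]
      rw [← Finset.sum_add_distrib]
      exact Finset.sum_congr rfl fun x _ => by ring
    have e3 := e2 p
    have e4 := e2 q
    rw [hF p, hF q, Finset.sum_sub_distrib, e1, e3, e4]
    ring
  have hquad : ∀ p : Fin N → ℝ, 0 ≤ (p - q) ⬝ᵥ X.mulVec (p - q) := by
    intro p
    have := hX.posSemidef.dotProduct_mulVec_nonneg (p - q)
    simpa using this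
  constructor
  · -- forward
    intro hfix
    have hqB : q ∈ B := by
      rw [hB]
      intro n
      rw [hfix n]
      exact vv_bounds _ _ _ _ _ (hδ n) (hδσ n) (hq n)
    have hmin : ∀ p ∈ B, F q ≤ F p := by
      intro p hp
      rw [hB] at hp
      have hsum : 0 ≤ ∑ n, (Ψ n (p n) - Ψ n (q n)) := by
        apply Finset.sum_nonneg
        intro n _
        have := vv_min (vbar n) (δ n) (σ n) (qbar n) ((X.mulVec q + vtil) n) (p n)
          (hδ n) (hδσ n) (hq n) (hp n).1 (hp n).2
        rw [← hfix n] at this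
        simpa [hΨ] using this
      have := key p
      nlinarith [hquad p]
    refine ⟨hqB, hmin, ?_⟩
    intro p hp hpmin
    by_contra hne
    have hstrict : 0 < (p - q) ⬝ᵥ X.mulVec (p - q) := by
      have := hX.dotProduct_mulVec_pos (sub_ne_zero.2 hne)
      simpa using this
    have hsum : 0 ≤ ∑ n, (Ψ n (p n) - Ψ n (q n)) := by
      rw [hB] at hp
      apply Finset.sum_nonneg
      intro n _
      have := vv_min (vbar n) (δ n) (σ n) (qbar n) ((X.mulVec q + vtil) n) (p n)
        (hδ n) (hδσ n) (hq n) (hp n).1 (hp n).2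
      rw [← hfix n] at this
      simpa [hΨ] using this
    have h1 := key p
    have h2 := hpmin q hqB
    nlinarith
  · -- backward
    rintro ⟨hqB, hmin, _⟩ n
    rw [hB] at hqB
    set u := (X.mulVec q + vtil) n with hu
    set fu := vvRule (vbar n) (δ n) (σ n) (qbar n) u with hfu
    have hfb := vv_bounds (vbar n) (δ n) (σ n) (qbar n) u (hδ n) (hδσ n) (hq n)
    have hfmin : ∀ t, -qbar n ≤ t → t ≤ qbar n → Ψ n fu ≤ Ψ n t := by
      intro t ht1 ht2
      exact vv_min (vbar n) (δ n) (σ n) (qbar n) u t (hδ n) (hδσ n) (hq n) ht1 ht2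
    -- coordinate variation inequality
    have hvar : ∀ t, -qbar n ≤ t → t ≤ qbar n →
        Ψ n (q n) ≤ Ψ n t + (1/2) * (X n n) * (t - q n) ^ 2 := by
      intro t ht1 ht2
      set p := Function.update q n t with hp
      have hpB : p ∈ B := by
        rw [hB]
        intro m
        by_cases hm : m = n
        · subst hm; simp [hp, ht1, ht2]
        · simp [hp, Function.update_of_ne hm, hqB m]
      have hFpq := hmin p hpB
      have hpq : p - q = Pi.single n (t - q n) := by
        funext m
        by_cases hm : m = n
        · subst hm; simp [hp]
        · simp [hp, Function.update_of_ne hm, Pi.single_apply, hm]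
      have hquadval : (p - q) ⬝ᵥ X.mulVec (p - q) = X n n * (t - q n) ^ 2 := by
        rw [hpq, mulVec_single, single_dotProduct]
        simp only [Pi.smul_apply, Matrix.col_apply, op_smul_eq_mul]
        ring
      have hsumval : ∑ m, (Ψ m (p m) - Ψ m (q m)) = Ψ n t - Ψ n (q n) := by
        rw [Finset.sum_eq_single n]
        · simp [hp]
        · intro m _ hm
          simp [hp, Function.update_of_ne hm]
        · intro h; exact absurd (Finset.mem_univ n) h
      have := key p
      rw [hquadval, hsumval] at this
      nlinarith
    -- X n n ≥ 0
    have hXnn : 0 ≤ X n n := by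
      have := hquad (q + Pi.single n 1)
      simpa [mulVec_single, single_dotProduct] using this
    -- show Ψ n (q n) ≤ Ψ n fu via small steps
    have hqmin : Ψ n (q n) ≤ Ψ n fu := by
      have hc : Ψ n (q n) - Ψ n fu ≤ 0 := by
        apply small_step (K := (1/2) * X n n * (fu - q n) ^ 2)
          (by positivity)
        intro l hl0 hl1
        set t := (1 - l) * q n + l * fu with ht
        have ht1 : -qbar n ≤ t := by nlinarith [(hqB n).1, hfb.1]
        have ht2 : t ≤ qbar n := by nlinarith [(hqB n).2, hfb.2]
        have h1 := hvar t ht1 ht2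
        have h2 : Ψ n t ≤ (1 - l) * Ψ n (q n) + l * Ψ n fu := by
          exact psi_convex (vbar n) (δ n) (σ n) (qbar n) u (hδ n) (hδσ n) (hq n)
            (q n) fu l hl0.le hl1
        have h3 : (t - q n) ^ 2 = l ^ 2 * (fu - q n) ^ 2 := by rw [ht]; ring
        rw [h3] at h1
        have hl2 : l ^ 2 ≤ l := by nlinarith
        nlinarith [sq_nonneg (fu - q n)]
      linarith
    -- q n is also a minimizer
    exact psi_unique (vbar n) (δ n) (σ n) (qbar n) u (hδ n) (hδσ n) (hq n)
      (hqB n).1 (hqB n).2 hfb.1 hfb.2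
      (fun t ht1 ht2 => le_trans hqmin (hfmin t ht1 ht2)) hfmin
end
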